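/- Let (Ω, μ) be a σ-finite measure space, 1 ≤ p < ∞, X a Banach space, and suppose (T₁,…,Tₙ) is a commuting tuple of bounded operators on X admitting a joint isometric loose dilation: T₁^{i₁}⋯Tₙ^{iₙ} = Q U₁^{i₁}⋯Uₙ^{iₙ} J with U_j commuting surjective isometries on a Banach space W and Q, J bounded. Then for every polynomial P ∈ ℂ[Z₁,…,Zₙ], ‖P(T₁,…,Tₙ)‖ ≤ ‖Q‖‖J‖ · ‖P(S₁,…,Sₙ) ⊗ I_W‖_{ℓ^p(ℤⁿ, W)→ℓ^p(ℤⁿ, W)}. -/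

import Mathlib

open Function
open scoped ENNReal

/-- Evaluation `P(T₁,…,Tₙ)` of a polynomial in `n` commuting variables at a tuple of
bounded operators. -/
noncomputable def polyEval {E : Type*} [NormedAddCommGroup E] [NormedSpace ℂ E]
    {n : ℕ} (P : MvPolynomial (Fin n) ℂ) (T : Fin n → E →L[ℂ] E) : E →L[ℂ] E :=
  P.support.sum fun e => P.coeff e • (List.ofFn fun j => T j ^ e j).prod

private lemma listProdMulComm {ι M : Type*} [Monoid M] (c d : ι → M)
    (h : ∀ i j, Commute (c i) (d j)) (l : List ι) :
    (l.map fun j => c j * d j).prod = (l.map c).prod * (l.map d).prod := by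
  induction l with
  | nil => simp
  | cons a l ih =>
    have hcomm : Commute (d a) ((l.map c).prod) :=
      Commute.list_prod_right _ _ (by
        intro y hy
        obtain ⟨j, hj, rfl⟩ := List.mem_map.mp hy
        exact (h j a).symm)
    simp only [List.map_cons, List.prod_cons, ih]
    exact hcomm.mul_mul_mul_comm (c a) ((l.map d).prod)

/-- A joint isometric loose dilation `T₁^{i₁}⋯Tₙ^{iₙ} = Q U₁^{i₁}⋯Uₙ^{iₙ} J` through
commuting surjective isometries `U_j` of a Banach space `W` yields joint
`p`-polynomial boundedness: `‖P(T)‖ ≤ ‖Q‖‖J‖·‖P(S₁,…,Sₙ)‖`, where `S_j` are the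
coordinate shifts on `ℓ^p(ℤⁿ, W)`. -/
theorem stmt14 {X W : Type*} [NormedAddCommGroup X] [NormedSpace ℂ X] [CompleteSpace X]
    [NormedAddCommGroup W] [NormedSpace ℂ W] [CompleteSpace W]
    (p : ℝ≥0∞) [Fact (1 ≤ p)] (hp : p ≠ ∞) (n : ℕ)
    (T : Fin n → X →L[ℂ] X) (hTcomm : ∀ i j, Commute (T i) (T j))
    (U : Fin n → W →L[ℂ] W)
    (hUiso : ∀ j, Isometry (U j)) (hUsurj : ∀ j, Surjective (U j))
    (hUcomm : ∀ i j, Commute (U i) (U j))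
    (Q : W →L[ℂ] X) (J : X →L[ℂ] W)
    (hdil : ∀ i : Fin n → ℕ,
      (List.ofFn fun j => T j ^ i j).prod
        = Q.comp (((List.ofFn fun j => U j ^ i j).prod).comp J))
    (S : Fin n → lp (fun _ : Fin n → ℤ => W) p →L[ℂ] lp (fun _ : Fin n → ℤ => W) p)
    (hS : ∀ j, ∀ a : lp (fun _ : Fin n → ℤ => W) p, ∀ k : Fin n → ℤ,
      (S j a) k = a (k - Pi.single j 1))
    (P : MvPolynomial (Fin n) ℂ) :
    ‖polyEval P T‖ ≤ ‖Q‖ * ‖J‖ * ‖polyEval P S‖ := by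
  classical
  -- the exponent
  set q := p.toReal with hqdef
  have hq1 : (1:ℝ) ≤ q := by
    have h1 : (1:ℝ≥0∞) ≤ p := Fact.out
    simpa using ENNReal.toReal_mono hp h1
  have hq0 : (0:ℝ) < q := lt_of_lt_of_le one_pos hq1
  -- the isometries as linear isometric equivalences
  let E : Fin n → (W ≃ₗᵢ[ℂ] W) := fun j =>
    LinearIsometryEquiv.ofSurjective
      ⟨(U j).toLinearMap, fun x => (hUiso j).norm_map_of_map_zero (map_zero _) x⟩ (hUsurj j)
  have hE : ∀ j x, E j x = U j x := fun j x => rfl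
  have hEcomm : ∀ i j, Commute (E i) (E j) := by
    intro i j
    have hx : ∀ x, U i (U j x) = U j (U i x) := by
      intro x
      have := congrArg (fun f : W →L[ℂ] W => f x) (hUcomm i j)
      simpa [ContinuousLinearMap.mul_apply] using this
    show E i * E j = E j * E i
    refine LinearIsometryEquiv.ext fun x => ?_
    simp only [LinearIsometryEquiv.coe_mul, Function.comp_apply]
    exact hx x
  -- the `ℤⁿ`-indexed group of products
  let φ : (Fin n → ℤ) → (W ≃ₗᵢ[ℂ] W) := fun k => (List.ofFn fun j => E j ^ k j).prod
  have hφadd : ∀ k m : Fin n → ℤ, φ (k + m) = φ k * φ m := by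
    intro k m
    show (List.ofFn fun j => E j ^ (k + m) j).prod
        = (List.ofFn fun j => E j ^ k j).prod * (List.ofFn fun j => E j ^ m j).prod
    have h1 : (List.ofFn fun j => E j ^ (k + m) j)
        = (List.finRange n).map fun j => (E j ^ k j) * (E j ^ m j) := by
      rw [List.ofFn_eq_map]
      congr 1
      funext j
      rw [Pi.add_apply, zpow_add]
    rw [h1, listProdMulComm _ _ (fun i j => (hEcomm i j).zpow_zpow _ _),
      ← List.ofFn_eq_map, ← List.ofFn_eq_map]
  have hφapp : ∀ (k m : Fin n → ℤ) (x : W), φ (k + m) x = φ k (φ m x) := by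
    intro k m x
    rw [hφadd]
    rfl
  have hφnorm : ∀ (k : Fin n → ℤ) (x : W), ‖φ k x‖ = ‖x‖ := fun k x => (φ k).norm_map x
  -- relation between `U`-powers and `φ`
  have hpowUE : ∀ (j : Fin n) (m : ℕ) (y : W), (U j ^ m) y = (E j ^ (m : ℤ)) y := by
    intro j m
    induction m with
    | zero => intro y; simp
    | succ m ih =>
      intro y
      rw [pow_succ, ContinuousLinearMap.mul_apply, ih,
        show ((m + 1 : ℕ) : ℤ) = (m : ℤ) + 1 by push_cast; ring, zpow_add_one]
      rfl
  have hUlist : ∀ (l : List (Fin n)) (e : Fin n → ℕ) (x : W),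
      ((l.map fun j => U j ^ e j).prod) x = ((l.map fun j => E j ^ ((e j : ℕ) : ℤ)).prod) x := by
    intro l
    induction l with
    | nil => intro e x; simp
    | cons i l ih =>
      intro e x
      simp only [List.map_cons, List.prod_cons, ContinuousLinearMap.mul_apply,
        LinearIsometryEquiv.coe_mul, Function.comp_apply]
      rw [ih, hpowUE]
  have hUφ : ∀ (e : Fin n → ℕ) (x : W),
      ((List.ofFn fun j => U j ^ e j).prod) x = φ (fun j => ((e j : ℕ) : ℤ)) x := by
    intro e x
    show _ = ((List.ofFn fun j => E j ^ ((e j : ℕ) : ℤ)).prod) x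
    rw [List.ofFn_eq_map, List.ofFn_eq_map]
    exact hUlist _ e x
  -- the shifts
  have hSpow : ∀ (j : Fin n) (m : ℕ) (a : lp (fun _ : Fin n → ℤ => W) p) (k : Fin n → ℤ),
      ((S j ^ m) a) k = a (k - (m : ℤ) • Pi.single j 1) := by
    intro j m
    induction m with
    | zero => intro a k; simp
    | succ m ih =>
      intro a k
      rw [pow_succ, ContinuousLinearMap.mul_apply, ih, hS]
      congr 1
      push_cast
      rw [sub_sub, add_smul, one_smul]
  have hSlist : ∀ (l : List (Fin n)) (e : Fin n → ℕ) (a : lp (fun _ : Fin n → ℤ => W) p)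
      (k : Fin n → ℤ),
      ((l.map fun j => S j ^ e j).prod a) k
        = a (k - (l.map fun j => ((e j : ℕ) : ℤ) • Pi.single j 1).sum) := by
    intro l
    induction l with
    | nil => intro e a k; simp
    | cons i l ih =>
      intro e a k
      simp only [List.map_cons, List.prod_cons, ContinuousLinearMap.mul_apply, List.sum_cons]
      rw [hSpow, ih, sub_sub]
  have hSprod : ∀ (e : Fin n → ℕ) (a : lp (fun _ : Fin n → ℤ => W) p) (k : Fin n → ℤ),
      ((List.ofFn fun j => S j ^ e j).prod a) k = a (k - fun j => ((e j : ℕ) : ℤ)) := by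
    intro e a k
    rw [List.ofFn_eq_map, hSlist]
    have h1 : ((List.finRange n).map fun j => ((e j : ℕ) : ℤ) • Pi.single j (1:ℤ)).sum
        = fun j => ((e j : ℕ) : ℤ) := by
      rw [← List.ofFn_eq_map, List.sum_ofFn]
      funext j'
      simp [Finset.sum_apply, Pi.single_apply]
    rw [h1]
  -- transference inequality
  have htrans : ‖polyEval P U‖ ≤ ‖polyEval P S‖ := by
    refine ContinuousLinearMap.opNorm_le_bound _ (norm_nonneg _) fun x => ?_
    set B : ℕ := P.support.sup fun e : Fin n →₀ ℕ => Finset.univ.sup ⇑e with hBdef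
    have hB : ∀ e ∈ P.support, ∀ j, ((e j : ℕ) : ℤ) ≤ (B : ℤ) := by
      intro e he j
      exact_mod_cast
        (le_trans (Finset.le_sup (f := ⇑e) (Finset.mem_univ j))
          (Finset.le_sup (f := fun e : Fin n →₀ ℕ => Finset.univ.sup ⇑e) he))
    set M := ‖(polyEval P U) x‖ with hMdef
    have key : ∀ N : ℕ, (((N - B : ℕ) : ℝ)) ^ n * M ^ q
        ≤ (‖polyEval P S‖ ^ q * ‖x‖ ^ q) * (N : ℝ) ^ n := by
      intro N
      set cube : Finset (Fin n → ℤ) := Fintype.piFinset fun _ => Finset.Ico (0:ℤ) (N:ℤ)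
        with hcube
      set incube : Finset (Fin n → ℤ) := Fintype.piFinset fun _ => Finset.Ico (B:ℤ) (N:ℤ)
        with hincube
      set a : lp (fun _ : Fin n → ℤ => W) p := ∑ k ∈ cube, lp.single p k (φ (-k) x)
        with hadef
      have ha_apply : ∀ m : Fin n → ℤ, a m = if m ∈ cube then φ (-m) x else 0 := by
        intro m
        rw [hadef]
        simp only [lp.coeFn_sum, Finset.sum_apply, lp.single_apply, Finset.sum_dite_eq,
          Pi.single_apply, Finset.sum_ite_eq, Finset.sum_ite_eq']
      have hnorm_a : ‖a‖ ^ q = (cube.card : ℝ) * ‖x‖ ^ q := by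
        rw [hadef, lp.norm_sum_single hq0]
        simp [hφnorm, Finset.sum_const, nsmul_eq_mul]
        exact Or.inl rfl
      have hPSa : ∀ k ∈ incube, ((polyEval P S) a) k = φ (-k) ((polyEval P U) x) := by
        intro k hk
        have hk' : ∀ j, (B:ℤ) ≤ k j ∧ k j < N := by
          intro j
          have := Fintype.mem_piFinset.mp hk j
          simpa [Finset.mem_Ico] using this
        have h1 : ((polyEval P S) a) k
            = ∑ e ∈ P.support, P.coeff e • a (k - fun j => ((e j : ℕ) : ℤ)) := by
          simp only [polyEval, ContinuousLinearMap.sum_apply, lp.coeFn_sum, Finset.sum_apply,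
            ContinuousLinearMap.smul_apply, lp.coeFn_smul, Pi.smul_apply]
          exact Finset.sum_congr rfl fun e he => by rw [hSprod]
        rw [h1]
        have h2 : ∀ e ∈ P.support,
            a (k - fun j => ((e j : ℕ) : ℤ)) = φ (-k) (φ (fun j => ((e j : ℕ) : ℤ)) x) := by
          intro e he
          have hmem : (k - fun j => ((e j : ℕ) : ℤ)) ∈ cube := by
            rw [hcube, Fintype.mem_piFinset]
            intro j
            simp only [Pi.sub_apply, Finset.mem_Ico]
            have hb := hB e he j
            have hk1 := (hk' j).1
            have hk2 := (hk' j).2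
            have he0 : (0:ℤ) ≤ ((e j : ℕ) : ℤ) := Int.natCast_nonneg _
            omega
          rw [ha_apply, if_pos hmem]
          have hneg : -(k - fun j => ((e j : ℕ) : ℤ)) = (-k) + fun j => ((e j : ℕ) : ℤ) := by
            funext j
            simp [Pi.sub_apply]
            ring
          rw [hneg, hφapp]
        calc ∑ e ∈ P.support, P.coeff e • a (k - fun j => ((e j : ℕ) : ℤ))
            = ∑ e ∈ P.support, P.coeff e • (φ (-k) (φ (fun j => ((e j : ℕ) : ℤ)) x)) :=
              Finset.sum_congr rfl fun e he => by rw [h2 e he]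
          _ = φ (-k) (∑ e ∈ P.support, P.coeff e • (φ (fun j => ((e j : ℕ) : ℤ)) x)) := by
              rw [map_sum]
              exact Finset.sum_congr rfl fun e _ => (map_smul _ _ _).symm
          _ = φ (-k) ((polyEval P U) x) := by
              congr 1
              simp only [polyEval, ContinuousLinearMap.sum_apply,
                ContinuousLinearMap.smul_apply]
              exact (Finset.sum_congr rfl fun e he => by rw [hUφ]).symm
      have hsum_inner : (incube.card : ℝ) * M ^ q ≤ ‖(polyEval P S) a‖ ^ q := by
        have hle := lp.sum_rpow_le_norm_rpow hq0 ((polyEval P S) a) incube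
        calc (incube.card : ℝ) * M ^ q
            = ∑ k ∈ incube, ‖((polyEval P S) a) k‖ ^ q := by
              rw [Finset.sum_congr rfl fun k hk => by rw [hPSa k hk, hφnorm]]
              simp [Finset.sum_const, nsmul_eq_mul, hMdef]
          _ ≤ _ := hle
      have hbound : ‖(polyEval P S) a‖ ^ q
          ≤ ‖polyEval P S‖ ^ q * ((cube.card : ℝ) * ‖x‖ ^ q) := by
        calc ‖(polyEval P S) a‖ ^ q ≤ (‖polyEval P S‖ * ‖a‖) ^ q :=
              Real.rpow_le_rpow (norm_nonneg _) ((polyEval P S).le_opNorm a) hq0.le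
          _ = ‖polyEval P S‖ ^ q * ‖a‖ ^ q := Real.mul_rpow (norm_nonneg _) (norm_nonneg _)
          _ = _ := by rw [hnorm_a]
      have hcard_cube : ((cube.card : ℕ) : ℝ) = (N : ℝ) ^ n := by
        rw [hcube]
        simp [Fintype.card_piFinset, Int.card_Ico]
      have hcard_incube : ((incube.card : ℕ) : ℝ) = (((N - B : ℕ)) : ℝ) ^ n := by
        rw [hincube]
        have : ((N : ℤ) - (B : ℤ)).toNat = N - B := by omega
        simp [Fintype.card_piFinset, Int.card_Ico, this]
      calc ((N - B : ℕ) : ℝ) ^ n * M ^ q = (incube.card : ℝ) * M ^ q := by rw [hcard_incube]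
        _ ≤ ‖polyEval P S‖ ^ q * ((cube.card : ℝ) * ‖x‖ ^ q) := le_trans hsum_inner hbound
        _ = (‖polyEval P S‖ ^ q * ‖x‖ ^ q) * (N : ℝ) ^ n := by rw [hcard_cube]; ring
    -- pass to the limit in `N`
    have hMq : M ^ q ≤ ‖polyEval P S‖ ^ q * ‖x‖ ^ q := by
      have h0 : Filter.Tendsto (fun N : ℕ => (B : ℝ) / (N : ℝ)) Filter.atTop (nhds 0) :=
        tendsto_const_div_atTop_nhds_zero_nat _
      have h1 : Filter.Tendsto (fun N : ℕ => (1 : ℝ) - (B : ℝ) / (N : ℝ))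
          Filter.atTop (nhds 1) := by
        simpa using Filter.Tendsto.const_sub (1:ℝ) h0
      have h2 : Filter.Tendsto (fun N : ℕ => ((1 : ℝ) - (B : ℝ) / (N : ℝ)) ^ n)
          Filter.atTop (nhds 1) := by
        simpa using h1.pow n
      have htend : Filter.Tendsto
          (fun N : ℕ => M ^ q * ((1 : ℝ) - (B : ℝ) / (N : ℝ)) ^ n)
          Filter.atTop (nhds (M ^ q)) := by
        simpa using h2.const_mul (M ^ q)
      refine le_of_tendsto htend ?_
      filter_upwards [Filter.eventually_ge_atTop (B + 1)] with N hN
      have hBN : B ≤ N := Nat.le_of_succ_le hN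
      have hNpos : (0:ℝ) < (N : ℝ) := by
        have : 1 ≤ N := le_trans (Nat.le_add_left 1 B) hN
        exact_mod_cast Nat.lt_of_lt_of_le Nat.zero_lt_one this
      have heq : (1 : ℝ) - (B : ℝ) / (N : ℝ) = ((N - B : ℕ) : ℝ) / (N : ℝ) := by
        rw [Nat.cast_sub hBN]
        field_simp
      rw [heq, div_pow, ← mul_div_assoc, div_le_iff₀ (by positivity)]
      have := key N
      nlinarith [this]
    -- conclude
    by_contra hcon
    push_neg at hcon
    have hK0 : 0 ≤ ‖polyEval P S‖ * ‖x‖ := by positivity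
    have hlt := Real.rpow_lt_rpow hK0 hcon hq0
    rw [Real.mul_rpow (norm_nonneg _) (norm_nonneg _)] at hlt
    linarith [hMq]
  -- factor `polyEval P T` through `Q` and `J`
  have hfact : polyEval P T = Q.comp ((polyEval P U).comp J) := by
    ext x
    simp only [polyEval, ContinuousLinearMap.sum_apply, ContinuousLinearMap.smul_apply,
      ContinuousLinearMap.comp_apply, map_sum, map_smul]
    refine Finset.sum_congr rfl fun e he => ?_
    rw [hdil ⇑e]
    simp [ContinuousLinearMap.comp_apply]
  rw [hfact]
  calc ‖Q.comp ((polyEval P U).comp J)‖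
      ≤ ‖Q‖ * ‖(polyEval P U).comp J‖ := ContinuousLinearMap.opNorm_comp_le _ _
    _ ≤ ‖Q‖ * (‖polyEval P U‖ * ‖J‖) := by
        gcongr
        exact ContinuousLinearMap.opNorm_comp_le _ _
    _ ≤ ‖Q‖ * (‖polyEval P S‖ * ‖J‖) := by gcongr
    _ = ‖Q‖ * ‖J‖ * ‖polyEval P S‖ := by ring
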